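/- If γ1 < γ2, the derivative of D(c, γ1, γ2) with respect to c is nonnegative if and only if c ≥ (sqrt(m2/m1) − sqrt(m1/m2)) / (m̄ (γ2 − γ1)); hence D has a unique minimizer in c. -/

import Mathlib

lemma key_le (m1 m2 T : ℝ) (hm1 : 0 < m1) (hm12 : m1 < m2) (hT : 0 < T) :
    (m2-m1) * Real.sqrt (T^2+4) ≤ (m1+m2)*T ↔ m2 - m1 ≤ Real.sqrt (m1*m2) * T := by
  have hm12' : (0:ℝ) ≤ m1*m2 := by nlinarith
  have hr : (Real.sqrt (m1*m2))^2 = m1*m2 := Real.sq_sqrt hm12'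
  have hS : (Real.sqrt (T^2+4))^2 = T^2+4 := Real.sq_sqrt (by positivity)
  have hrpos : 0 < Real.sqrt (m1*m2) := Real.sqrt_pos.mpr (by nlinarith)
  have hSpos : 0 < Real.sqrt (T^2+4) := Real.sqrt_pos.mpr (by positivity)
  rw [← pow_le_pow_iff_left₀ (mul_nonneg (by linarith) hSpos.le) (mul_nonneg (by linarith) hT.le) (two_ne_zero),
      ← pow_le_pow_iff_left₀ (by linarith : (0:ℝ) ≤ m2 - m1) (mul_nonneg hrpos.le hT.le) (two_ne_zero)]
  constructor <;> intro h <;> nlinarith [sq_nonneg T, sq_nonneg (m2-m1)]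

lemma key_lt (m1 m2 T : ℝ) (hm1 : 0 < m1) (hm12 : m1 < m2) (hT : 0 < T) :
    (m2-m1) * Real.sqrt (T^2+4) < (m1+m2)*T ↔ m2 - m1 < Real.sqrt (m1*m2) * T := by
  have hm12' : (0:ℝ) ≤ m1*m2 := by nlinarith
  have hr : (Real.sqrt (m1*m2))^2 = m1*m2 := Real.sq_sqrt hm12'
  have hS : (Real.sqrt (T^2+4))^2 = T^2+4 := Real.sq_sqrt (by positivity)
  have hrpos : 0 < Real.sqrt (m1*m2) := Real.sqrt_pos.mpr (by nlinarith)
  have hSpos : 0 < Real.sqrt (T^2+4) := Real.sqrt_pos.mpr (by positivity)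
  rw [← pow_lt_pow_iff_left₀ (mul_nonneg (by linarith) hSpos.le) (mul_nonneg (by linarith) hT.le) (two_ne_zero),
      ← pow_lt_pow_iff_left₀ (by linarith : (0:ℝ) ≤ m2 - m1) (mul_nonneg hrpos.le hT.le) (two_ne_zero)]
  constructor <;> intro h <;> nlinarith [sq_nonneg T, sq_nonneg (m2-m1)]

lemma mdd_hasDeriv (m1 m2 lam γ1 γ2 mbar : ℝ) (hlam : 0 < lam) (hmbarpos : 0 < mbar) (c : ℝ) :
    HasDerivAt (fun c : ℝ => c*(γ1-γ2)*(m2-m1)/(2*lam) + (m1+m2)/(lam*mbar)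
        - 2/lam + (m1+m2) * Real.sqrt ((c*mbar*(γ1-γ2))^2 + 4) / (2*lam*mbar))
      (((γ1-γ2)*(m2-m1)*Real.sqrt ((c*mbar*(γ1-γ2))^2 + 4)
        + (m1+m2)*c*mbar*(γ1-γ2)^2) / (2*lam*Real.sqrt ((c*mbar*(γ1-γ2))^2 + 4))) c := by
  have hargpos : (0:ℝ) < (c*mbar*(γ1-γ2))^2 + 4 := by positivity
  have hSpos : 0 < Real.sqrt ((c*mbar*(γ1-γ2))^2 + 4) := Real.sqrt_pos.mpr hargpos
  have hS : (Real.sqrt ((c*mbar*(γ1-γ2))^2 + 4))^2 = (c*mbar*(γ1-γ2))^2 + 4 :=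
    Real.sq_sqrt hargpos.le
  have h1 : HasDerivAt (fun c : ℝ => c*(γ1-γ2)*(m2-m1)/(2*lam))
      ((γ1-γ2)*(m2-m1)/(2*lam)) c := by
    have := (((hasDerivAt_id c).mul_const (γ1-γ2)).mul_const (m2-m1)).div_const (2*lam)
    simpa using this
  have h2 : HasDerivAt (fun c : ℝ => (c*mbar*(γ1-γ2))^2 + 4)
      (2*(c*mbar*(γ1-γ2))*(mbar*(γ1-γ2))) c := by
    have := ((((hasDerivAt_id c).mul_const mbar).mul_const (γ1-γ2)).pow 2).add_const 4
    exact this.congr_deriv (by simp)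
  have h3 : HasDerivAt (fun c : ℝ => Real.sqrt ((c*mbar*(γ1-γ2))^2 + 4))
      (1/(2*Real.sqrt ((c*mbar*(γ1-γ2))^2 + 4)) * (2*(c*mbar*(γ1-γ2))*(mbar*(γ1-γ2)))) c :=
    (Real.hasDerivAt_sqrt hargpos.ne').comp c h2
  have h4 := ((h1.add_const ((m1+m2)/(lam*mbar))).sub_const (2/lam)).add
      ((h3.const_mul (m1+m2)).div_const (2*lam*mbar))
  refine h4.congr_deriv ?_
  field_simp

theorem mean_delay_derivative_sign_and_unique_min
    (m1 m2 lam γ1 γ2 mbar : ℝ)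
    (hm1 : 0 < m1) (hm12 : m1 < m2) (hlam : 0 < lam)
    (hγ1 : γ1 ∈ Set.Icc (0:ℝ) 1) (hγ2 : γ2 ∈ Set.Icc (0:ℝ) 1) (hγ : γ1 < γ2)
    (hmbar : mbar = m1 + m2 - lam) (hmbarpos : 0 < mbar) :
    (∀ c : ℝ, 0 < c →
      (0 ≤ deriv (fun c : ℝ => c*(γ1-γ2)*(m2-m1)/(2*lam) + (m1+m2)/(lam*mbar)
          - 2/lam + (m1+m2) * Real.sqrt ((c*mbar*(γ1-γ2))^2 + 4) / (2*lam*mbar)) c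
        ↔ c ≥ (Real.sqrt (m2/m1) - Real.sqrt (m1/m2)) / (mbar*(γ2-γ1)))) ∧
    (∃! c₀ : ℝ, c₀ ∈ Set.Ioi (0:ℝ) ∧
      IsMinOn (fun c : ℝ => c*(γ1-γ2)*(m2-m1)/(2*lam) + (m1+m2)/(lam*mbar)
          - 2/lam + (m1+m2) * Real.sqrt ((c*mbar*(γ1-γ2))^2 + 4) / (2*lam*mbar))
        (Set.Ioi 0) c₀) := by
  have hs : 0 < γ2 - γ1 := sub_pos.mpr hγ
  have hm2 : 0 < m2 := lt_trans hm1 hm12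
  set F : ℝ → ℝ := fun c : ℝ => c*(γ1-γ2)*(m2-m1)/(2*lam) + (m1+m2)/(lam*mbar)
          - 2/lam + (m1+m2) * Real.sqrt ((c*mbar*(γ1-γ2))^2 + 4) / (2*lam*mbar) with hF
  set c₀ : ℝ := (Real.sqrt (m2/m1) - Real.sqrt (m1/m2)) / (mbar*(γ2-γ1)) with hc₀
  have hsqm1 : Real.sqrt m1 > 0 := Real.sqrt_pos.mpr hm1
  have hsqm2 : Real.sqrt m2 > 0 := Real.sqrt_pos.mpr hm2
  have hrpos : 0 < Real.sqrt (m1*m2) := Real.sqrt_pos.mpr (by positivity)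
  have hc₀eq : c₀ = (m2-m1) / (Real.sqrt (m1*m2) * (mbar*(γ2-γ1))) := by
    rw [hc₀, Real.sqrt_div hm2.le, Real.sqrt_div hm1.le, Real.sqrt_mul hm1.le]
    rw [div_eq_div_iff (by positivity) (by positivity)]
    have e1 : Real.sqrt m1 * Real.sqrt m1 = m1 := Real.mul_self_sqrt hm1.le
    have e2 : Real.sqrt m2 * Real.sqrt m2 = m2 := Real.mul_self_sqrt hm2.le
    field_simp
    nlinarith [e1, e2]
  have hc₀pos : 0 < c₀ := by
    rw [hc₀eq]; exact div_pos (by linarith) (by positivity)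
  -- sign of derivative
  have hsign_le : ∀ c : ℝ, 0 < c → (0 ≤ deriv F c ↔ c₀ ≤ c) := by
    intro c hc
    have harg : (c*mbar*(γ1-γ2))^2 + 4 = (c*(mbar*(γ2-γ1)))^2 + 4 := by ring
    have hSpos : 0 < Real.sqrt ((c*(mbar*(γ2-γ1)))^2 + 4) := Real.sqrt_pos.mpr (by positivity)
    have hd := (mdd_hasDeriv m1 m2 lam γ1 γ2 mbar hlam hmbarpos c).deriv
    rw [← hF] at hd
    rw [hd, harg, le_div_iff₀ (by positivity), zero_mul]
    set T := c*(mbar*(γ2-γ1)) with hT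
    have hTpos : 0 < T := by positivity
    have hNeq : (γ1-γ2)*(m2-m1)*Real.sqrt (T^2+4) + (m1+m2)*c*mbar*(γ1-γ2)^2
        = (γ2-γ1)*((m1+m2)*T - (m2-m1)*Real.sqrt (T^2+4)) := by rw [hT]; ring
    rw [hNeq, mul_nonneg_iff_of_pos_left hs, sub_nonneg,
        key_le m1 m2 T hm1 hm12 hTpos, hc₀eq, div_le_iff₀ (by positivity)]
    have heq : Real.sqrt (m1*m2)*T = c*(Real.sqrt (m1*m2)*(mbar*(γ2-γ1))) := by rw [hT]; ring
    rw [heq]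
  have hsign_lt : ∀ c : ℝ, 0 < c → (0 < deriv F c ↔ c₀ < c) := by
    intro c hc
    have harg : (c*mbar*(γ1-γ2))^2 + 4 = (c*(mbar*(γ2-γ1)))^2 + 4 := by ring
    have hSpos : 0 < Real.sqrt ((c*(mbar*(γ2-γ1)))^2 + 4) := Real.sqrt_pos.mpr (by positivity)
    have hd := (mdd_hasDeriv m1 m2 lam γ1 γ2 mbar hlam hmbarpos c).deriv
    rw [← hF] at hd
    rw [hd, harg, lt_div_iff₀ (by positivity), zero_mul]
    set T := c*(mbar*(γ2-γ1)) with hT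
    have hTpos : 0 < T := by positivity
    have hNeq : (γ1-γ2)*(m2-m1)*Real.sqrt (T^2+4) + (m1+m2)*c*mbar*(γ1-γ2)^2
        = (γ2-γ1)*((m1+m2)*T - (m2-m1)*Real.sqrt (T^2+4)) := by rw [hT]; ring
    rw [hNeq, mul_pos_iff_of_pos_left hs, sub_pos,
        key_lt m1 m2 T hm1 hm12 hTpos, hc₀eq, div_lt_iff₀ (by positivity)]
    have heq : Real.sqrt (m1*m2)*T = c*(Real.sqrt (m1*m2)*(mbar*(γ2-γ1))) := by rw [hT]; ring
    rw [heq]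
  refine ⟨fun c hc => hsign_le c hc, ?_⟩
  -- continuity
  have hcont : Continuous F := by
    rw [hF]; fun_prop
  have hmono : StrictMonoOn F (Set.Ici c₀) :=
    strictMonoOn_of_deriv_pos (convex_Ici c₀) hcont.continuousOn (by
      intro x hx
      rw [interior_Ici] at hx
      exact (hsign_lt x (lt_trans hc₀pos hx)).mpr hx)
  have hanti : StrictAntiOn F (Set.Icc 0 c₀) :=
    strictAntiOn_of_deriv_neg (convex_Icc 0 c₀) hcont.continuousOn (by
      intro x hx
      rw [interior_Icc] at hx
      exact not_le.mp fun h => (not_le.mpr hx.2) ((hsign_le x hx.1).mp h))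
  have hmin : IsMinOn F (Set.Ioi 0) c₀ := by
    rw [isMinOn_iff]
    intro x hx
    rcases lt_trichotomy x c₀ with h | h | h
    · exact (hanti ⟨(Set.mem_Ioi.mp hx).le, h.le⟩ ⟨hc₀pos.le, le_refl _⟩ h).le
    · rw [h]
    · exact (hmono (Set.self_mem_Ici) h.le h).le
  refine ⟨c₀, ⟨Set.mem_Ioi.mpr hc₀pos, hmin⟩, ?_⟩
  rintro c1 ⟨hc1, hmin1⟩
  by_contra hne
  have h1 : F c1 ≤ F c₀ := isMinOn_iff.mp hmin1 c₀ (Set.mem_Ioi.mpr hc₀pos)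
  rcases lt_or_gt_of_ne hne with h | h
  · have := hanti ⟨(Set.mem_Ioi.mp hc1).le, h.le⟩ ⟨hc₀pos.le, le_refl _⟩ h
    linarith
  · have := hmono (Set.self_mem_Ici) h.le h
    linarith
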